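/- Let N, M, K be positive natural numbers and let s ∈ ℝ^N be a vector whose entries lie in {0,1} with ∑_{n=1}^{N} s_n = M. Regard diag(s) as a complex N×N matrix. Then for A ∈ ℂ^{N×K} and X_MC ∈ ℂ^{N×K}, the equality X_MC = diag(s)·A holds if and only if there exist matrices U ∈ ℂ^{N×N} and V ∈ ℂ^{K×K} such that the block matrix [[U, X_MC, diag(s)], [X_MCᴴ, V, Aᴴ], [diag(s), A, I_N]] is positive semidefinite and Re(Tr(U)) − M ≤ 0. -/

import Mathlib

open Matrix
open scoped ComplexOrder

theorem posSemidef_exists_eq_conjTranspose_mul_self_aux {n : Type} [Fintype n] [DecidableEq n]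
    (M : Matrix n n ℂ) (h : M.PosSemidef) : ∃ C : Matrix n n ℂ, M = Cᴴ * C := by
  open scoped MatrixOrder in
  refine ⟨CFC.sqrt M, ?_⟩
  have h0 : 0 ≤ M := nonneg_iff_posSemidef.mpr h
  have hs : (CFC.sqrt M)ᴴ = CFC.sqrt M := (CFC.sqrt_nonneg M).isSelfAdjoint.star_eq
  rw [hs, CFC.sqrt_mul_sqrt_self M h0]

/-- The LMI reformulation (constraints C6c and C6d) from the mutual-coupling Appendix
of the paper: for a `0-1` vector `s` with `∑_n s_n = M`, the equality
`X_MC = diag(s)·A` holds iff there exist `U`, `V` such that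
`[[U, X_MC, diag(s)], [X_MCᴴ, V, Aᴴ], [diag(s), A, I_N]] ⪰ 0` and `Re(Tr U) − M ≤ 0`. -/
theorem stmt_13 (N M K : ℕ) (hN : 0 < N) (hM : 0 < M) (hK : 0 < K)
    (s : Fin N → ℝ) (hbin : ∀ n, s n = 0 ∨ s n = 1) (hsum : (∑ n, s n) = (M : ℝ))
    (A : Matrix (Fin N) (Fin K) ℂ) (XMC : Matrix (Fin N) (Fin K) ℂ) :
    XMC = Matrix.diagonal (fun n => (s n : ℂ)) * A ↔
      ∃ (U : Matrix (Fin N) (Fin N) ℂ) (V : Matrix (Fin K) (Fin K) ℂ),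
        (Matrix.fromBlocks
            (Matrix.fromBlocks U XMC XMCᴴ V)
            (Matrix.fromRows (Matrix.diagonal fun n => (s n : ℂ)) Aᴴ)
            (Matrix.fromCols (Matrix.diagonal fun n => (s n : ℂ)) A)
            (1 : Matrix (Fin N) (Fin N) ℂ)).PosSemidef ∧
        (Matrix.trace U).re - (M : ℝ) ≤ 0 := by
  set D : Matrix (Fin N) (Fin N) ℂ := Matrix.diagonal (fun n => (s n : ℂ)) with hD
  have hDH : Dᴴ = D := by
    ext i j
    rcases eq_or_ne i j with h | h
    · subst h; simp [hD, Matrix.conjTranspose_apply, Matrix.diagonal_apply_eq,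
        Complex.conj_ofReal]
    · simp [hD, Matrix.conjTranspose_apply, Matrix.diagonal_apply_ne _ h,
        Matrix.diagonal_apply_ne _ (Ne.symm h)]
  have hDD : D * D = D := by
    have hfun : (fun n => (s n : ℂ) * (s n : ℂ)) = fun n => (s n : ℂ) := by
      funext n
      rcases hbin n with h | h <;> simp [h]
    rw [hD, diagonal_mul_diagonal, hfun]
  have htrD : (Matrix.trace D).re = (M : ℝ) := by
    rw [hD, trace_diagonal]
    rw [← Complex.ofReal_sum, Complex.ofReal_re, hsum]
  constructor
  · rintro rfl
    refine ⟨D * D, Aᴴ * A, ?_, ?_⟩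
    · have hfac : Matrix.fromBlocks
            (Matrix.fromBlocks (D * D) (D * A) (D * A)ᴴ (Aᴴ * A))
            (Matrix.fromRows D Aᴴ)
            (Matrix.fromCols D A)
            (1 : Matrix (Fin N) (Fin N) ℂ)
          = (fromCols (fromCols D A) (1 : Matrix (Fin N) (Fin N) ℂ))ᴴ *
            (fromCols (fromCols D A) (1 : Matrix (Fin N) (Fin N) ℂ)) := by
        rw [conjTranspose_fromCols_eq_fromRows_conjTranspose,
          fromRows_mul_fromCols, conjTranspose_fromCols_eq_fromRows_conjTranspose,
          fromRows_mul_fromCols]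
        simp [hDH, hDD, Matrix.conjTranspose_mul, hDH, Matrix.mul_one, Matrix.one_mul]
      rw [hfac]
      exact posSemidef_conjTranspose_mul_self _
    · rw [hDD]
      simp [htrD]
  · rintro ⟨U, V, hPSD, htr⟩
    obtain ⟨C, hC⟩ := posSemidef_exists_eq_conjTranspose_mul_self_aux _ hPSD
    set C₁ : Matrix ((Fin N ⊕ Fin K) ⊕ Fin N) (Fin N) ℂ :=
      fun k i => C k (Sum.inl (Sum.inl i)) with hC₁
    set C₂ : Matrix ((Fin N ⊕ Fin K) ⊕ Fin N) (Fin K) ℂ :=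
      fun k i => C k (Sum.inl (Sum.inr i)) with hC₂
    set C₃ : Matrix ((Fin N ⊕ Fin K) ⊕ Fin N) (Fin N) ℂ :=
      fun k i => C k (Sum.inr i) with hC₃
    have hU : C₁ᴴ * C₁ = U := by
      ext i j
      have := congrFun (congrFun hC (Sum.inl (Sum.inl i))) (Sum.inl (Sum.inl j))
      simp only [Matrix.mul_apply, conjTranspose_apply]
      simpa [Matrix.mul_apply, conjTranspose_apply, hC₁] using this.symm
    have hDeq : C₁ᴴ * C₃ = D := by
      ext i j
      have := congrFun (congrFun hC (Sum.inl (Sum.inl i))) (Sum.inr j)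
      simp only [Matrix.mul_apply, conjTranspose_apply]
      simpa [Matrix.mul_apply, conjTranspose_apply, hC₁, hC₃] using this.symm
    have hX : C₁ᴴ * C₂ = XMC := by
      ext i j
      have := congrFun (congrFun hC (Sum.inl (Sum.inl i))) (Sum.inl (Sum.inr j))
      simp only [Matrix.mul_apply, conjTranspose_apply]
      simpa [Matrix.mul_apply, conjTranspose_apply, hC₁, hC₂] using this.symm
    have hAeq : C₂ᴴ * C₃ = Aᴴ := by
      ext i j
      have := congrFun (congrFun hC (Sum.inl (Sum.inr i))) (Sum.inr j)
      simp only [Matrix.mul_apply, conjTranspose_apply]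
      simpa [Matrix.mul_apply, conjTranspose_apply, hC₂, hC₃] using this.symm
    have hI : C₃ᴴ * C₃ = 1 := by
      ext i j
      have := congrFun (congrFun hC (Sum.inr i)) (Sum.inr j)
      simp only [Matrix.mul_apply, conjTranspose_apply]
      simpa [Matrix.mul_apply, conjTranspose_apply, hC₃] using this.symm
    have hDeq' : C₃ᴴ * C₁ = D := by
      calc C₃ᴴ * C₁ = (C₁ᴴ * C₃)ᴴ := by simp [Matrix.conjTranspose_mul]
      _ = D := by rw [hDeq, hDH]
    -- E := C₁ - C₃ * D
    set E : Matrix ((Fin N ⊕ Fin K) ⊕ Fin N) (Fin N) ℂ := C₁ - C₃ * D with hE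
    have h1 : C₁ᴴ * (C₃ * D) = D := by rw [← Matrix.mul_assoc, hDeq, hDD]
    have h2 : D * C₃ᴴ * C₁ = D := by rw [Matrix.mul_assoc, hDeq', hDD]
    have h3 : D * C₃ᴴ * (C₃ * D) = D := by
      rw [Matrix.mul_assoc, ← Matrix.mul_assoc C₃ᴴ, hI, Matrix.one_mul, hDD]
    have hEE : Eᴴ * E = U - D := by
      rw [hE, Matrix.conjTranspose_sub, Matrix.sub_mul, Matrix.mul_sub, Matrix.mul_sub,
        Matrix.conjTranspose_mul, hDH, hU, h1, h2, h3]
      abel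
    have hEtr : (Matrix.trace (Eᴴ * E)).re = ∑ i, ∑ k, Complex.normSq (E k i) := by
      rw [Matrix.trace]
      simp only [Matrix.diag, Matrix.mul_apply, conjTranspose_apply]
      rw [Complex.re_sum]
      congr 1; funext i
      rw [Complex.re_sum]
      congr 1; funext k
      have : star (E k i) * E k i = (Complex.normSq (E k i) : ℂ) := by
        rw [Complex.star_def, mul_comm, Complex.mul_conj]
      rw [this, Complex.ofReal_re]
    have hle : (Matrix.trace (Eᴴ * E)).re ≤ 0 := by
      rw [hEE, Matrix.trace_sub, Complex.sub_re, htrD]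
      linarith
    have hE0 : E = 0 := by
      have hsum0 : ∑ i, ∑ k, Complex.normSq (E k i) ≤ 0 := hEtr ▸ hle
      have hnn : ∀ i ∈ Finset.univ, (0:ℝ) ≤ ∑ k, Complex.normSq (E k i) :=
        fun i _ => Finset.sum_nonneg fun k _ => Complex.normSq_nonneg _
      have hall : ∀ i k, Complex.normSq (E k i) = 0 := by
        intro i k
        have h1 : ∑ i, ∑ k, Complex.normSq (E k i) = 0 :=
          le_antisymm hsum0 (Finset.sum_nonneg hnn)
        have h2 := (Finset.sum_eq_zero_iff_of_nonneg hnn).mp h1 i (Finset.mem_univ i)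
        exact (Finset.sum_eq_zero_iff_of_nonneg
          (fun k _ => Complex.normSq_nonneg _)).mp h2 k (Finset.mem_univ k)
      ext k i
      exact Complex.normSq_eq_zero.mp (hall i k)
    have hC₁eq : C₁ = C₃ * D := by
      have := sub_eq_zero.mp hE0
      exact this
    rw [← hX, hC₁eq, Matrix.conjTranspose_mul, hDH, Matrix.mul_assoc]
    congr 1
    calc C₃ᴴ * C₂ = (C₂ᴴ * C₃)ᴴ := by simp [Matrix.conjTranspose_mul]
    _ = A := by rw [hAeq, conjTranspose_conjTranspose]
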